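/- arXiv:2604.21132 — 3 statements merged into one kernel-verified Lean document; each statement's English description precedes it below -/
import Mathlib

section
/- Let f : ℝⁿ → ℝ be differentiable, convex, and L-smooth. Suppose x⁺ ∈ ℝⁿ satisfies ⟨∇f(x⁺), x⁺ - x⟩ = 0 and ⟨∇f(x⁺), ∇f(x)⟩ = 0. Then f(x) - f(x⁺) ≥ (‖∇f(x⁺)‖² + ‖∇f(x)‖²)/(2L). -/
open RealInnerProductSpace

lemma descent_aux {n : ℕ} (f : EuclideanSpace ℝ (Fin n) → ℝ)
    (g : EuclideanSpace ℝ (Fin n) → EuclideanSpace ℝ (Fin n)) (L : ℝ) (hL : 0 < L)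
    (hgrad : ∀ x, HasGradientAt f (g x) x)
    (hsmooth : ∀ x y : EuclideanSpace ℝ (Fin n), ‖g x - g y‖ ≤ L * ‖x - y‖)
    (x y : EuclideanSpace ℝ (Fin n)) :
    f y ≤ f x + ⟪g x, y - x⟫ + L / 2 * ‖y - x‖ ^ 2 := by
  set v := y - x with hv
  set ψ : ℝ → ℝ := fun t => f (x + t • v) - (t * ⟪g x, v⟫ + L * t ^ 2 * ‖v‖ ^ 2 / 2) with hψdef
  have hc : ∀ t : ℝ, HasDerivAt (fun t : ℝ => x + t • v) v t := fun t => by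
    simpa using ((hasDerivAt_id t).smul_const v).const_add x
  have hψ : ∀ t : ℝ, HasDerivAt ψ (⟪g (x + t • v), v⟫ - (⟪g x, v⟫ + L * t * ‖v‖ ^ 2)) t := by
    intro t
    have h1 : HasDerivAt (fun t : ℝ => f (x + t • v)) ⟪g (x + t • v), v⟫ t := by
      have := (hgrad (x + t • v)).hasFDerivAt.comp_hasDerivAt t (hc t)
      simp [InnerProductSpace.toDual] at this
      exact this
    have h2 : HasDerivAt (fun t : ℝ => t * ⟪g x, v⟫ + L * t ^ 2 * ‖v‖ ^ 2 / 2)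
        (⟪g x, v⟫ + L * t * ‖v‖ ^ 2) t := by
      have ha : HasDerivAt (fun t : ℝ => t * ⟪g x, v⟫) ⟪g x, v⟫ t := by
        simpa using (hasDerivAt_id t).mul_const ⟪g x, v⟫
      have hb : HasDerivAt (fun t : ℝ => L * t ^ 2 * ‖v‖ ^ 2 / 2) (L * t * ‖v‖ ^ 2) t := by
        have : HasDerivAt (fun t : ℝ => t ^ 2) (2 * t) t := by
          simpa using hasDerivAt_pow 2 t
        have := ((this.const_mul L).mul_const (‖v‖ ^ 2)).div_const 2
        rw [show L * t * ‖v‖ ^ 2 = L * (2 * t) * ‖v‖ ^ 2 / 2 by ring]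
        exact this
      exact ha.add hb
    exact h1.sub h2
  have hanti : AntitoneOn ψ (Set.Icc (0:ℝ) 1) := by
    apply antitoneOn_of_deriv_nonpos (convex_Icc 0 1)
    · exact (Differentiable.continuous (fun t => (hψ t).differentiableAt)).continuousOn
    · exact fun t _ => (hψ t).differentiableAt.differentiableWithinAt
    · intro t ht
      rw [interior_Icc] at ht
      rw [(hψ t).deriv]
      have key : ⟪g (x + t • v) - g x, v⟫ ≤ L * t * ‖v‖ ^ 2 := by
        calc ⟪g (x + t • v) - g x, v⟫ ≤ ‖g (x + t • v) - g x‖ * ‖v‖ := real_inner_le_norm _ _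
          _ ≤ (L * ‖(x + t • v) - x‖) * ‖v‖ := by
              exact mul_le_mul_of_nonneg_right (hsmooth _ _) (norm_nonneg _)
          _ = L * t * ‖v‖ ^ 2 := by
              simp [norm_smul, abs_of_pos ht.1]; ring
      have := key
      rw [inner_sub_left] at this
      linarith
  have h01 := hanti (Set.left_mem_Icc.2 zero_le_one) (Set.right_mem_Icc.2 zero_le_one) zero_le_one
  have h0 : ψ 0 = f x := by simp [hψdef]
  have h1 : ψ 1 = f y - (⟪g x, v⟫ + L * ‖v‖ ^ 2 / 2) := by simp [hψdef, hv]
  rw [h0, h1] at h01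
  linarith

/-- Baillon–Haddad descent under double orthogonality. -/
theorem stmt_5 {n : ℕ} (f : EuclideanSpace ℝ (Fin n) → ℝ)
    (g : EuclideanSpace ℝ (Fin n) → EuclideanSpace ℝ (Fin n)) (L : ℝ) (hL : 0 < L)
    (hgrad : ∀ x, HasGradientAt f (g x) x)
    (hconv : ∀ x y : EuclideanSpace ℝ (Fin n), f y ≥ f x + ⟪g x, y - x⟫)
    (hsmooth : ∀ x y : EuclideanSpace ℝ (Fin n), ‖g x - g y‖ ≤ L * ‖x - y‖)
    (x xp : EuclideanSpace ℝ (Fin n))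
    (horth1 : ⟪g xp, xp - x⟫ = 0) (horth2 : ⟪g xp, g x⟫ = 0) :
    f x - f xp ≥ (‖g xp‖ ^ 2 + ‖g x‖ ^ 2) / (2 * L) := by
  set u : EuclideanSpace ℝ (Fin n) := x - (1 / L) • (g x - g xp) with hu
  have h1 := hconv xp u
  have h2 := descent_aux f g L hL hgrad hsmooth x u
  have horth2' : ⟪g x, g xp⟫ = 0 := by rw [real_inner_comm]; exact horth2
  have hux : u - x = -((1 / L) • (g x - g xp)) := by rw [hu]; abel
  have hinner1 : ⟪g x, u - x⟫ = -(1 / L) * ‖g x‖ ^ 2 := by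
    rw [hux, inner_neg_right, inner_smul_right, inner_sub_right, horth2',
      real_inner_self_eq_norm_sq]; ring
  have hnorm : ‖u - x‖ ^ 2 = (1 / L) ^ 2 * (‖g x‖ ^ 2 + ‖g xp‖ ^ 2) := by
    rw [hux, norm_neg, norm_smul, mul_pow]
    have hd : ‖g x - g xp‖ ^ 2 = ‖g x‖ ^ 2 + ‖g xp‖ ^ 2 := by
      rw [← real_inner_self_eq_norm_sq, inner_sub_left, inner_sub_right, inner_sub_right,
        horth2, horth2', real_inner_self_eq_norm_sq, real_inner_self_eq_norm_sq]; ring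
    rw [hd]
    have : |1 / L| = 1 / L := abs_of_pos (by positivity)
    rw [Real.norm_eq_abs, this]
  have hb : ⟪g xp, g x - g xp⟫ = -‖g xp‖ ^ 2 := by
    rw [inner_sub_right, horth2, real_inner_self_eq_norm_sq]; ring
  have hx0 : ⟪g xp, xp⟫ = ⟪g xp, x⟫ := by
    rw [inner_sub_right] at horth1; linarith
  have hinner2 : ⟪g xp, u - xp⟫ = (1 / L) * ‖g xp‖ ^ 2 := by
    have h3 : u - xp = (x - xp) - (1 / L) • (g x - g xp) := by rw [hu]; abel
    rw [h3, inner_sub_right, inner_smul_right, hb, inner_sub_right, hx0]; ring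
  rw [hinner1, hnorm] at h2
  rw [hinner2] at h1
  rw [ge_iff_le, div_le_iff₀ (by positivity)]
  have key : f xp + 1 / L * ‖g xp‖ ^ 2 ≤
      f x + -(1 / L) * ‖g x‖ ^ 2 + L / 2 * ((1 / L) ^ 2 * (‖g x‖ ^ 2 + ‖g xp‖ ^ 2)) := by
    linarith
  have hL' : L ≠ 0 := ne_of_gt hL
  field_simp at key
  have key2 : (f xp * (2 * L) + (‖g xp‖ ^ 2 + ‖g x‖ ^ 2)) * L ^ 3 ≤ f x * (2 * L) * L ^ 3 := by
    nlinarith [key, pow_pos hL 3]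
  have key3 := le_of_mul_le_mul_right key2 (by positivity : (0:ℝ) < L ^ 3)
  linarith
end

section
/- Let f : ℝⁿ → ℝ be differentiable, μ-strongly convex, and L-smooth with minimizer x* and κ = L/μ. Suppose x, x⁺ ∈ ℝⁿ satisfy ⟨∇f(x⁺), x⁺ - x⟩ = 0, ⟨∇f(x⁺), ∇f(x)⟩ = 0, and f(x⁺) ≤ f(x). Then f(x⁺) - f(x*) ≤ ((κ-1)/(κ+1)) (f(x) - f(x*)). -/
open RealInnerProductSpace

variable {n : ℕ}

lemma line_deriv (f : EuclideanSpace ℝ (Fin n) → ℝ)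
    (g : EuclideanSpace ℝ (Fin n) → EuclideanSpace ℝ (Fin n))
    (hgrad : ∀ x, HasGradientAt f (g x) x)
    (v u : EuclideanSpace ℝ (Fin n)) (t : ℝ) :
    HasDerivAt (fun s : ℝ => f (v + s • u)) ⟪g (v + t • u), u⟫ t := by
  have hline : HasDerivAt (fun s : ℝ => v + s • u) u t := by
    simpa using ((hasDerivAt_id t).smul_const u).const_add v
  have := (hgrad (v + t • u)).hasFDerivAt.comp_hasDerivAt t hline
  simp at this
  exact this

lemma descent (f : EuclideanSpace ℝ (Fin n) → ℝ)
    (g : EuclideanSpace ℝ (Fin n) → EuclideanSpace ℝ (Fin n)) (L : ℝ) (hL : 0 < L)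
    (hgrad : ∀ x, HasGradientAt f (g x) x)
    (hsmooth : ∀ x y : EuclideanSpace ℝ (Fin n), ‖g x - g y‖ ≤ L * ‖x - y‖)
    (v w : EuclideanSpace ℝ (Fin n)) :
    f w ≤ f v + ⟪g v, w - v⟫ + L / 2 * ‖w - v‖ ^ 2 := by
  set u := w - v with hu
  set q : ℝ → ℝ := fun t => f (v + t • u) - t * ⟪g v, u⟫ - L * ‖u‖ ^ 2 / 2 * t ^ 2 with hq
  have hq' : ∀ t, HasDerivAt q (⟪g (v + t • u), u⟫ - ⟪g v, u⟫ - L * ‖u‖ ^ 2 * t) t := by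
    intro t
    have h1 := line_deriv f g hgrad v u t
    have h2 : HasDerivAt (fun t : ℝ => t * ⟪g v, u⟫) ⟪g v, u⟫ t := by
      simpa using (hasDerivAt_id t).mul_const ⟪g v, u⟫
    have h3 : HasDerivAt (fun t : ℝ => L * ‖u‖ ^ 2 / 2 * t ^ 2) (L * ‖u‖ ^ 2 * t) t := by
      have := (hasDerivAt_pow 2 t).const_mul (L * ‖u‖ ^ 2 / 2)
      refine this.congr_deriv ?_
      ring
    have h4 := (h1.sub h2).sub h3
    exact h4
  have hanti : AntitoneOn q (Set.Icc 0 1) := by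
    apply antitoneOn_of_deriv_nonpos (convex_Icc 0 1)
    · exact fun t ht => ((hq' t).differentiableAt.continuousAt).continuousWithinAt
    · exact fun t ht => ((hq' t).differentiableAt).differentiableWithinAt
    · intro t ht
      rw [interior_Icc] at ht
      rw [(hq' t).deriv]
      have key : ⟪g (v + t • u) - g v, u⟫ ≤ L * ‖u‖ ^ 2 * t := by
        calc ⟪g (v + t • u) - g v, u⟫ ≤ ‖g (v + t • u) - g v‖ * ‖u‖ := real_inner_le_norm _ _
          _ ≤ (L * ‖(v + t • u) - v‖) * ‖u‖ := by
              gcongr; exact hsmooth _ _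
          _ = L * ‖u‖ ^ 2 * t := by
              simp [norm_smul, abs_of_pos ht.1]; ring
      have := inner_sub_left (𝕜 := ℝ) (g (v + t • u)) (g v) u
      linarith [key, this.symm.le, this.le]
    
  have h01 := hanti (Set.left_mem_Icc.2 one_pos.le) (Set.right_mem_Icc.2 one_pos.le) one_pos.le
  simp only [hq] at h01
  simp only [zero_smul, add_zero, one_smul, zero_pow, mul_zero, mul_one, one_pow, zero_mul,
    sub_zero] at h01
  have : v + u = w := by rw [hu]; abel
  rw [this] at h01
  linarith

lemma interp (f : EuclideanSpace ℝ (Fin n) → ℝ)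
    (g : EuclideanSpace ℝ (Fin n) → EuclideanSpace ℝ (Fin n)) (L : ℝ) (hL : 0 < L)
    (hgrad : ∀ x, HasGradientAt f (g x) x)
    (hconv : ∀ x y : EuclideanSpace ℝ (Fin n), f y ≥ f x + ⟪g x, y - x⟫)
    (hsmooth : ∀ x y : EuclideanSpace ℝ (Fin n), ‖g x - g y‖ ≤ L * ‖x - y‖)
    (z y : EuclideanSpace ℝ (Fin n)) :
    f y ≥ f z + ⟪g z, y - z⟫ + 1 / (2 * L) * ‖g y - g z‖ ^ 2 := by
  set w : EuclideanSpace ℝ (Fin n) := y - (1 / L) • (g y - g z) with hw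
  have h1 := hconv z w
  have h2 := descent f g L hL hgrad hsmooth y w
  have hwy : w - y = -((1 / L) • (g y - g z)) := by rw [hw]; abel
  have hnorm : ‖w - y‖ ^ 2 = (1 / L) ^ 2 * ‖g y - g z‖ ^ 2 := by
    rw [hwy, norm_neg, norm_smul]
    rw [Real.norm_eq_abs, abs_of_pos (one_div_pos.2 hL)]
    ring
  have hip : ⟪g y, w - y⟫ = -(1 / L) * ⟪g y, g y - g z⟫ := by
    rw [hwy, inner_neg_right, real_inner_smul_right]; ring
  have hwz : ⟪g z, w - z⟫ = ⟪g z, y - z⟫ - (1 / L) * ⟪g z, g y - g z⟫ := by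
    have : w - z = (y - z) - (1 / L) • (g y - g z) := by rw [hw]; abel
    rw [this, inner_sub_right, real_inner_smul_right]
  have hsq : ⟪g y, g y - g z⟫ - ⟪g z, g y - g z⟫ = ‖g y - g z‖ ^ 2 := by
    rw [← inner_sub_left]
    exact real_inner_self_eq_norm_sq _
  rw [hwz] at h1
  rw [hip, hnorm] at h2
  have hL' : L ≠ 0 := ne_of_gt hL
  have : f z + ⟪g z, y - z⟫ + 1 / (2 * L) * ‖g y - g z‖ ^ 2 ≤ f y := by
    have e : L / 2 * ((1 / L) ^ 2 * ‖g y - g z‖ ^ 2) = 1 / (2 * L) * ‖g y - g z‖ ^ 2 := by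
      field_simp
    rw [e] at h2
    have hsq' : (1 / L) * ⟪g y, g y - g z⟫ - (1 / L) * ⟪g z, g y - g z⟫
        = (1 / L) * ‖g y - g z‖ ^ 2 := by rw [← mul_sub, hsq]
    have hhalf : (1 / L) * ‖g y - g z‖ ^ 2 = 2 * (1 / (2 * L) * ‖g y - g z‖ ^ 2) := by
      field_simp
    linarith
  linarith


/-- Improved contraction rate (κ-1)/(κ+1) under double orthogonality, κ = L/μ. -/
theorem stmt_7 {n : ℕ} (f : EuclideanSpace ℝ (Fin n) → ℝ)
    (g : EuclideanSpace ℝ (Fin n) → EuclideanSpace ℝ (Fin n)) (μ L : ℝ)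
    (hμ : 0 < μ) (hμL : μ ≤ L)
    (hgrad : ∀ x, HasGradientAt f (g x) x)
    (hsc : ∀ x y : EuclideanSpace ℝ (Fin n),
      f y ≥ f x + ⟪g x, y - x⟫ + μ / 2 * ‖y - x‖ ^ 2)
    (hsmooth : ∀ x y : EuclideanSpace ℝ (Fin n), ‖g x - g y‖ ≤ L * ‖x - y‖)
    (xs : EuclideanSpace ℝ (Fin n)) (hmin : ∀ y, f xs ≤ f y)
    (x xp : EuclideanSpace ℝ (Fin n))
    (horth1 : ⟪g xp, xp - x⟫ = 0) (horth2 : ⟪g xp, g x⟫ = 0)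
    (hdec : f xp ≤ f x) :
    f xp - f xs ≤ (L / μ - 1) / (L / μ + 1) * (f x - f xs) := by
  have hL : 0 < L := lt_of_lt_of_le hμ hμL
  have hconv : ∀ u v : EuclideanSpace ℝ (Fin n), f v ≥ f u + ⟪g u, v - u⟫ := by
    intro u v
    have := hsc u v
    nlinarith [sq_nonneg ‖v - u‖]
  -- PL inequality
  have hPL : ∀ z : EuclideanSpace ℝ (Fin n), 2 * μ * (f z - f xs) ≤ ‖g z‖ ^ 2 := by
    intro z
    have h := hsc z xs
    have hip : -(‖g z‖ * ‖xs - z‖) ≤ ⟪g z, xs - z⟫ := by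
      have := abs_real_inner_le_norm (g z) (xs - z)
      linarith [abs_le.1 this |>.1]
    nlinarith [sq_nonneg (‖g z‖ - μ * ‖xs - z‖), sq_nonneg ‖xs - z‖]
  -- key descent inequality: f x - f xp ≥ (‖g x‖² + ‖g xp‖²)/(2L)
  have hkey := interp f g L hL hgrad hconv hsmooth xp x
  have hgn : ‖g x - g xp‖ ^ 2 = ‖g x‖ ^ 2 + ‖g xp‖ ^ 2 := by
    have := norm_sub_sq_real (g x) (g xp)
    rw [real_inner_comm] at this
    rw [this, horth2]
    ring
  have hor1' : ⟪g xp, x - xp⟫ = 0 := by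
    have : x - xp = -(xp - x) := by abel
    rw [this, inner_neg_right, horth1, neg_zero]
  rw [hor1', hgn] at hkey
  -- so f x ≥ f xp + 1/(2L)(‖g x‖² + ‖g xp‖²)
  have ha := hPL x
  have hb := hPL xp
  set a := f x - f xs with hA
  set b := f xp - f xs with hB
  have hb0 : 0 ≤ b := by have := hmin xp; simp [hB]; linarith
  have hmain : μ * (a + b) ≤ L * (a - b) := by
    have h2L : (0:ℝ) < 2 * L := by linarith
    have : 2 * μ * a + 2 * μ * b ≤ ‖g x‖ ^ 2 + ‖g xp‖ ^ 2 := by linarith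
    have h3 : 1 / (2 * L) * (2 * μ * a + 2 * μ * b) ≤ 1 / (2 * L) * (‖g x‖ ^ 2 + ‖g xp‖ ^ 2) := by
      apply mul_le_mul_of_nonneg_left this
      positivity
    have h4 : 1 / (2 * L) * (‖g x‖ ^ 2 + ‖g xp‖ ^ 2) ≤ a - b := by
      simp only [hA, hB]; linarith
    have h5 : 1 / (2 * L) * (2 * μ * a + 2 * μ * b) = μ * (a + b) / L := by
      field_simp
    rw [h5] at h3
    calc μ * (a + b) = (μ * (a + b) / L) * L := by field_simp
      _ ≤ (a - b) * L := by
          apply mul_le_mul_of_nonneg_right (le_trans h3 h4) hL.le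
      _ = L * (a - b) := by ring
  -- conclude
  have hκ : 0 < L / μ + 1 := by positivity
  rw [div_mul_eq_mul_div, le_div_iff₀ hκ]
  have expand : b * (L / μ + 1) = (L * b + μ * b) / μ := by field_simp
  have expand2 : (L / μ - 1) * a = (L * a - μ * a) / μ := by field_simp
  rw [expand, expand2, div_le_div_iff₀ hμ hμ]
  nlinarith [hmain]
end

section
/- Let f : ℝⁿ → ℝ be differentiable, μ-strongly convex, and L-smooth with minimizer x*. If a sequence {xᵏ} satisfies f(xᵏ⁺¹) ≤ f(xᵏ - (1/L)∇f(xᵏ)) for all k, then f(xᵏ) - f(x*) ≤ (1 - μ/L)^(k-1) (f(x¹) - f(x*)) for all k ≥ 1. -/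
open RealInnerProductSpace

/-- Descent lemma: an `L`-smooth function is bounded above by its quadratic model. -/
lemma stmt_8_descent {n : ℕ} (f : EuclideanSpace ℝ (Fin n) → ℝ)
    (g : EuclideanSpace ℝ (Fin n) → EuclideanSpace ℝ (Fin n)) (L : ℝ) (hL : 0 < L)
    (hgrad : ∀ x, HasGradientAt f (g x) x)
    (hsmooth : ∀ x y : EuclideanSpace ℝ (Fin n), ‖g x - g y‖ ≤ L * ‖x - y‖)
    (a v : EuclideanSpace ℝ (Fin n)) :
    f (a + v) ≤ f a + ⟪g a, v⟫ + L / 2 * ‖v‖ ^ 2 := by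
  set φ : ℝ → ℝ := fun t => f (a + t • v) - t * ⟪g a, v⟫ - L / 2 * t ^ 2 * ‖v‖ ^ 2 with hφ
  have hderiv : ∀ t : ℝ, HasDerivAt φ
      (⟪g (a + t • v), v⟫ - ⟪g a, v⟫ - L / 2 * (2 * t) * ‖v‖ ^ 2) t := by
    intro t
    have hc : HasDerivAt (fun s : ℝ => a + s • v) v t := by
      simpa using ((hasDerivAt_id t).smul_const v).const_add a
    have h1 : HasDerivAt (fun s : ℝ => f (a + s • v)) ⟪g (a + t • v), v⟫ t := by
      have := (hgrad (a + t • v)).hasFDerivAt.comp_hasDerivAt t hc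
      simpa [InnerProductSpace.toDual_apply_apply, Function.comp_def] using this
    have h2 : HasDerivAt (fun s : ℝ => s * ⟪g a, v⟫) ⟪g a, v⟫ t := by
      simpa using (hasDerivAt_id t).mul_const (⟪g a, v⟫ : ℝ)
    have h3 : HasDerivAt (fun s : ℝ => L / 2 * s ^ 2 * ‖v‖ ^ 2)
        (L / 2 * (2 * t) * ‖v‖ ^ 2) t := by
      have := ((hasDerivAt_pow 2 t).const_mul (L / 2)).mul_const (‖v‖ ^ 2)
      simpa [mul_comm, mul_assoc, mul_left_comm] using this
    exact (h1.sub h2).sub h3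
  have hanti : AntitoneOn φ (Set.Icc (0 : ℝ) 1) := by
    apply antitoneOn_of_deriv_nonpos (convex_Icc 0 1)
    · exact fun t _ => ((hderiv t).continuousAt).continuousWithinAt
    · intro t ht
      exact (hderiv t).differentiableAt.differentiableWithinAt
    · intro t ht
      rw [(hderiv t).deriv]
      have ht0 : 0 ≤ t := by
        have := ht
        rw [interior_Icc] at this
        exact le_of_lt this.1
      have key : ⟪g (a + t • v), v⟫ - ⟪g a, v⟫ ≤ L * t * ‖v‖ ^ 2 := by
        have h1 : ⟪g (a + t • v) - g a, v⟫ ≤ ‖g (a + t • v) - g a‖ * ‖v‖ :=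
          real_inner_le_norm _ _
        have h2 : ‖g (a + t • v) - g a‖ ≤ L * (t * ‖v‖) := by
          have := hsmooth (a + t • v) a
          simpa [norm_smul, Real.norm_eq_abs, abs_of_nonneg ht0] using this
        have h3 : ‖g (a + t • v) - g a‖ * ‖v‖ ≤ L * (t * ‖v‖) * ‖v‖ :=
          mul_le_mul_of_nonneg_right h2 (norm_nonneg v)
        calc ⟪g (a + t • v), v⟫ - ⟪g a, v⟫ = ⟪g (a + t • v) - g a, v⟫ := by
              rw [inner_sub_left]
          _ ≤ ‖g (a + t • v) - g a‖ * ‖v‖ := h1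
          _ ≤ L * (t * ‖v‖) * ‖v‖ := h3
          _ = L * t * ‖v‖ ^ 2 := by ring
      nlinarith [key]
  have h01 : φ 1 ≤ φ 0 := hanti (by norm_num) (by norm_num) (by norm_num)
  have e0 : φ 0 = f a := by simp [hφ]
  have e1 : φ 1 = f (a + v) - ⟪g a, v⟫ - L / 2 * ‖v‖ ^ 2 := by simp [hφ]
  rw [e0, e1] at h01
  linarith

/-- Linear convergence at rate 1 - μ/L for any method dominating a 1/L gradient step. -/
theorem stmt_8 {n : ℕ} (f : EuclideanSpace ℝ (Fin n) → ℝ)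
    (g : EuclideanSpace ℝ (Fin n) → EuclideanSpace ℝ (Fin n)) (μ L : ℝ)
    (hμ : 0 < μ) (hμL : μ ≤ L)
    (hgrad : ∀ x, HasGradientAt f (g x) x)
    (hsc : ∀ x y : EuclideanSpace ℝ (Fin n),
      f y ≥ f x + ⟪g x, y - x⟫ + μ / 2 * ‖y - x‖ ^ 2)
    (hsmooth : ∀ x y : EuclideanSpace ℝ (Fin n), ‖g x - g y‖ ≤ L * ‖x - y‖)
    (xs : EuclideanSpace ℝ (Fin n)) (hmin : ∀ y, f xs ≤ f y)
    (x : ℕ → EuclideanSpace ℝ (Fin n))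
    (hstep : ∀ k : ℕ, f (x (k + 1)) ≤ f (x k - (1 / L) • g (x k))) :
    ∀ k : ℕ, 1 ≤ k →
      f (x k) - f xs ≤ (1 - μ / L) ^ (k - 1) * (f (x 1) - f xs) := by
  have hL : 0 < L := lt_of_lt_of_le hμ hμL
  -- PL inequality
  have hPL : ∀ a, 2 * μ * (f a - f xs) ≤ ‖g a‖ ^ 2 := by
    intro a
    have h1 := hsc a xs
    have h2 : -(‖g a‖ * ‖xs - a‖) ≤ ⟪g a, xs - a⟫ := by
      have := abs_real_inner_le_norm (g a) (xs - a)
      cases abs_le.mp this with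
      | intro hl hr => linarith
    nlinarith [sq_nonneg (μ * ‖xs - a‖ - ‖g a‖), norm_nonneg (xs - a), norm_nonneg (g a)]
  -- one step contraction
  have hcontract : ∀ k : ℕ, f (x (k + 1)) - f xs ≤ (1 - μ / L) * (f (x k) - f xs) := by
    intro k
    set a := x k
    have hdesc : f (a - (1 / L) • g a) ≤ f a - ‖g a‖ ^ 2 / (2 * L) := by
      have := stmt_8_descent f g L hL hgrad hsmooth a (-((1 / L) • g a))
      have e : a + -((1 / L) • g a) = a - (1 / L) • g a := by abel
      rw [e] at this
      have einner : ⟪g a, -((1 / L) • g a)⟫ = -(1 / L) * ‖g a‖ ^ 2 := by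
        rw [inner_neg_right, real_inner_smul_right, real_inner_self_eq_norm_sq]
        ring
      have enorm : ‖-((1 / L) • g a)‖ ^ 2 = (1 / L) ^ 2 * ‖g a‖ ^ 2 := by
        rw [norm_neg, norm_smul, Real.norm_eq_abs, abs_of_nonneg (by positivity : (0:ℝ) ≤ 1 / L)]
        ring
      rw [einner, enorm] at this
      have : f (a - (1 / L) • g a) ≤ f a + (-(1 / L) * ‖g a‖ ^ 2) + L / 2 * ((1 / L) ^ 2 * ‖g a‖ ^ 2) := this
      have hLne : L ≠ 0 := ne_of_gt hL
      calc f (a - (1 / L) • g a) ≤ f a + (-(1 / L) * ‖g a‖ ^ 2) + L / 2 * ((1 / L) ^ 2 * ‖g a‖ ^ 2) := this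
        _ = f a - ‖g a‖ ^ 2 / (2 * L) := by field_simp; ring
    have hpl := hPL a
    have h1 : f (x (k + 1)) ≤ f a - ‖g a‖ ^ 2 / (2 * L) := le_trans (hstep k) hdesc
    have h2 : 2 * μ * (f a - f xs) / (2 * L) ≤ ‖g a‖ ^ 2 / (2 * L) := by
      gcongr
    have h3 : μ / L * (f a - f xs) = 2 * μ * (f a - f xs) / (2 * L) := by
      field_simp
    have h4 : (1 - μ / L) * (f a - f xs) = (f a - f xs) - μ / L * (f a - f xs) := by ring
    linarith
  have hfac : 0 ≤ 1 - μ / L := by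
    have : μ / L ≤ 1 := (div_le_one hL).mpr hμL
    linarith
  have hiter : ∀ m : ℕ, f (x (m + 1)) - f xs ≤ (1 - μ / L) ^ m * (f (x 1) - f xs) := by
    intro m
    induction m with
    | zero => simp
    | succ m ih =>
      calc f (x (m + 1 + 1)) - f xs ≤ (1 - μ / L) * (f (x (m + 1)) - f xs) := hcontract (m + 1)
        _ ≤ (1 - μ / L) * ((1 - μ / L) ^ m * (f (x 1) - f xs)) :=
            mul_le_mul_of_nonneg_left ih hfac
        _ = (1 - μ / L) ^ (m + 1) * (f (x 1) - f xs) := by ring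
  intro k hk
  obtain ⟨m, rfl⟩ := Nat.exists_eq_add_of_le hk
  simpa [Nat.add_comm, Nat.add_sub_cancel] using hiter m
end
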